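/- Let K ≥ 1, let W^init be a full-support probability vector on Fin K, let R : Fin K → ℝ, and let τ > 0. Then the minimum over all probability vectors W on Fin K of ∑_k w_k·R_k + τ·KL(W‖W^init) equals −τ·log(∑_j w_j^init·exp(−R_j/τ)). -/
import Mathlib


open Finset Real

/-- Kullback–Leibler divergence between finitely supported probability vectors.
Terms with `p y = 0` vanish since `0 * log _ = 0`. -/
noncomputable def KL {Y : Type*} [Fintype Y] (p q : Y → ℝ) : ℝ :=
  ∑ y, p y * Real.log (p y / q y)

/-- The minimum of `∑ k, W k * R k + τ * KL(W ‖ W_init)` over probability vectors equals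
`−τ * log (∑ j, W_init j * exp (−R j / τ))`, and it is attained. -/
theorem min_value_is_neg_log_partition
    (K : ℕ) (hK : 1 ≤ K)
    (Winit : Fin K → ℝ) (hWinit_pos : ∀ k, 0 < Winit k) (hWinit_sum : ∑ k, Winit k = 1)
    (R : Fin K → ℝ) (τ : ℝ) (hτ : 0 < τ) :
    IsLeast
      ((fun W : Fin K → ℝ => (∑ k, W k * R k) + τ * KL W Winit) ''
        {W : Fin K → ℝ | (∀ k, 0 ≤ W k) ∧ ∑ k, W k = 1})
      (-τ * Real.log (∑ j, Winit j * Real.exp (-(R j) / τ))) := by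
  have hKpos : 0 < K := hK
  haveI : Nonempty (Fin K) := Fin.pos_iff_nonempty.mp hKpos
  set Z : ℝ := ∑ j, Winit j * Real.exp (-(R j) / τ) with hZ
  have hZpos : 0 < Z := by
    apply Finset.sum_pos (fun j _ => mul_pos (hWinit_pos j) (Real.exp_pos _))
    exact Finset.univ_nonempty
  set Wstar : Fin K → ℝ := fun k => Winit k * Real.exp (-(R k) / τ) / Z with hWs
  have hWstar_pos : ∀ k, 0 < Wstar k := fun k =>
    div_pos (mul_pos (hWinit_pos k) (Real.exp_pos _)) hZpos
  have hWstar_sum : ∑ k, Wstar k = 1 := by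
    rw [← Finset.sum_div, ← hZ, div_self hZpos.ne']
  constructor
  · refine ⟨Wstar, ⟨fun k => (hWstar_pos k).le, hWstar_sum⟩, ?_⟩
    have hterm : ∀ k : Fin K, Wstar k * R k + τ * (Wstar k * Real.log (Wstar k / Winit k))
        = (-τ * Real.log Z) * Wstar k := by
      intro k
      have h1 : Wstar k / Winit k = Real.exp (-(R k) / τ) / Z := by
        rw [hWs, div_div, mul_comm Z (Winit k), ← div_div,
          mul_div_assoc, ← mul_div_assoc, mul_div_cancel_left₀ _ (hWinit_pos k).ne']
      rw [h1, Real.log_div (Real.exp_pos _).ne' hZpos.ne', Real.log_exp]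
      field_simp
      ring
    simp only [KL, Finset.mul_sum, ← Finset.sum_add_distrib]
    calc (∑ k, (Wstar k * R k + τ * (Wstar k * Real.log (Wstar k / Winit k))))
        = ∑ k, (-τ * Real.log Z) * Wstar k := by
          exact Finset.sum_congr rfl fun k _ => hterm k
      _ = -τ * Real.log Z := by rw [← Finset.mul_sum, hWstar_sum, mul_one]
  · rintro x ⟨W, ⟨hWnn, hWsum⟩, rfl⟩
    simp only [KL]
    have hterm : ∀ k : Fin K,
        τ * ((W k - Wstar k) - W k * Real.log Z)
          ≤ W k * R k + τ * (W k * Real.log (W k / Winit k)) := by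
      intro k
      rcases eq_or_lt_of_le (hWnn k) with h0 | hpos
      · rw [← h0]
        simp only [zero_mul, mul_zero, zero_sub, zero_div, Real.log_zero, add_zero, sub_zero]
        have : -Wstar k ≤ 0 := neg_nonpos.mpr (hWstar_pos k).le
        nlinarith
      · -- W k > 0
        have hlog : Real.log (Wstar k / W k) ≤ Wstar k / W k - 1 :=
          Real.log_le_sub_one_of_pos (div_pos (hWstar_pos k) hpos)
        have hlogdiv : Real.log (Wstar k / W k) = Real.log (Wstar k) - Real.log (W k) :=
          Real.log_div (hWstar_pos k).ne' hpos.ne'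
        have hWsk : Real.log (Wstar k) = Real.log (Winit k) + (-(R k) / τ) - Real.log Z := by
          rw [hWs]
          rw [Real.log_div (mul_pos (hWinit_pos k) (Real.exp_pos _)).ne' hZpos.ne',
            Real.log_mul (hWinit_pos k).ne' (Real.exp_pos _).ne', Real.log_exp]
        have hWdiv : Real.log (W k / Winit k) = Real.log (W k) - Real.log (Winit k) :=
          Real.log_div hpos.ne' (hWinit_pos k).ne'
        -- from hlog: log Wstar - log W ≤ Wstar/W - 1, multiply by W k > 0
        have key : W k * (Real.log (Wstar k) - Real.log (W k)) ≤ Wstar k - W k := by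
          rw [← hlogdiv]
          have := mul_le_mul_of_nonneg_left hlog hpos.le
          calc W k * Real.log (Wstar k / W k) ≤ W k * (Wstar k / W k - 1) := this
            _ = Wstar k - W k := by field_simp
        rw [hWdiv]
        rw [hWsk] at key
        have key2 := mul_le_mul_of_nonneg_left key hτ.le
        have hcancel : τ * (W k * (Real.log (Winit k) + -R k / τ - Real.log Z - Real.log (W k)))
            = τ * W k * Real.log (Winit k) - W k * R k - τ * W k * Real.log Z
              - τ * W k * Real.log (W k) := by
          field_simp
          ring
        rw [hcancel] at key2
        nlinarith [key2]
    have hsum : (∑ k, τ * ((W k - Wstar k) - W k * Real.log Z)) ≤ ∑ k, (W k * R k + τ * (W k * Real.log (W k / Winit k))) := Finset.sum_le_sum (fun k _ => hterm k)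
    have hL : ∑ k, τ * ((W k - Wstar k) - W k * Real.log Z) = -τ * Real.log Z := by
      rw [← Finset.mul_sum]
      have : ∑ k, ((W k - Wstar k) - W k * Real.log Z)
          = (∑ k, W k) - (∑ k, Wstar k) - (∑ k, W k) * Real.log Z := by
        rw [Finset.sum_sub_distrib, Finset.sum_sub_distrib, ← Finset.sum_mul]
      rw [this, hWsum, hWstar_sum]
      ring
    calc -τ * Real.log Z = ∑ k, τ * ((W k - Wstar k) - W k * Real.log Z) := hL.symm
      _ ≤ ∑ k, (W k * R k + τ * (W k * Real.log (W k / Winit k))) := hsum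
      _ = (∑ k, W k * R k) + τ * ∑ k, W k * Real.log (W k / Winit k) := by
          rw [Finset.sum_add_distrib, Finset.mul_sum]
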